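/- arXiv:2006.06546 — 2 statements merged into one kernel-verified Lean document; each statement's English description precedes it below -/
import Mathlib

section
/- Let k > 0 and let K ⊂ ℝ³ be a nonempty compact set. Then sup_{|x|=r} sup_{y∈K} |x| · | e^{ik|x-y|}/|x-y| − (e^{ik|x|}/|x|) e^{−ik x̂·y} | → 0 as r → ∞, where x̂ = x/|x|. -/
open Real Complex

set_option maxHeartbeats 1000000

lemma exp_I_lip (s t : ℝ) :
    ‖Complex.exp (Complex.I * s) - Complex.exp (Complex.I * t)‖ ≤ |s - t| := by
  have h : ∀ u : ℝ, HasDerivAt (fun v : ℝ => Complex.exp (Complex.I * v))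
      (Complex.I * Complex.exp (Complex.I * u)) u := by
    intro u
    have h1 : HasDerivAt (fun v : ℝ => (Complex.I * v : ℂ)) Complex.I u := by
      simpa using ((Complex.ofRealCLM.hasDerivAt (x := u)).const_mul Complex.I)
    simpa [mul_comm] using h1.cexp
  have := Convex.norm_image_sub_le_of_norm_hasDerivWithin_le
    (f := fun v : ℝ => Complex.exp (Complex.I * v))
    (f' := fun u => Complex.I * Complex.exp (Complex.I * u)) (C := 1)
    (fun u _ => (h u).hasDerivWithinAt)
    (fun u _ => by simp [Complex.norm_exp]) convex_univ (Set.mem_univ t) (Set.mem_univ s)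
  simpa [Real.dist_eq] using this

theorem farfield_asymptotic (k : ℝ) (hk : 0 < k)
    (K : Set (EuclideanSpace ℝ (Fin 3))) (hK : IsCompact K) (hKne : K.Nonempty) :
    ∀ ε > 0, ∃ R : ℝ, ∀ x : EuclideanSpace ℝ (Fin 3), R ≤ ‖x‖ → ∀ y ∈ K,
      ‖x‖ * ‖Complex.exp (Complex.I * k * ‖x - y‖) / (‖x - y‖ : ℂ) -
          (Complex.exp (Complex.I * k * ‖x‖) / (‖x‖ : ℂ)) *
            Complex.exp (-Complex.I * k * (inner ℝ (‖x‖⁻¹ • x) y : ℝ))‖ < ε := by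
  intro ε hε
  obtain ⟨C, hC⟩ := hK.isBounded.exists_norm_le
  have hC0 : 0 ≤ C := le_trans (norm_nonneg _) (hC _ hKne.choose_spec)
  refine ⟨max (C + 1) (C + (C + k * C * C + 1) / ε), fun x hx y hy => ?_⟩
  have hyC : ‖y‖ ≤ C := hC y hy
  have hx1 : C + 1 ≤ ‖x‖ := le_trans (le_max_left _ _) hx
  have hx2 : C + (C + k * C * C + 1) / ε ≤ ‖x‖ := le_trans (le_max_right _ _) hx
  have hxpos : 0 < ‖x‖ := by linarith
  have hxne : x ≠ 0 := norm_pos_iff.mp hxpos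
  set a : ℝ := ‖x - y‖ with ha
  set c : ℝ := (inner ℝ (‖x‖⁻¹ • x) y : ℝ) with hc
  have hcval : c = ‖x‖⁻¹ * (inner ℝ x y : ℝ) := by
    rw [hc, real_inner_smul_left]
  have hcabs : |c| ≤ ‖y‖ := by
    have hu : ‖(‖x‖⁻¹ • x)‖ = 1 := by
      rw [norm_smul, norm_inv, norm_norm, inv_mul_cancel₀ hxpos.ne']
    calc |c| ≤ ‖(‖x‖⁻¹ • x)‖ * ‖y‖ := abs_real_inner_le_norm _ _
      _ = ‖y‖ := by rw [hu, one_mul]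
  have hcub := (abs_le.mp hcabs).2
  have hclb := (abs_le.mp hcabs).1
  set b : ℝ := ‖x‖ - c with hb
  have hb1 : 1 ≤ b := by rw [hb]; linarith
  have hxy1 : ‖x‖ - ‖y‖ ≤ a := norm_sub_norm_le x y
  have ha1 : 1 ≤ a := by linarith
  have hapos : 0 < a := by linarith
  set D : ℝ := ‖x‖ - C with hD
  have hD1 : 1 ≤ D := by rw [hD]; linarith
  have hDε : (C + k * C * C + 1) / ε ≤ D := by rw [hD]; linarith
  have haD : D ≤ a := by rw [hD]; linarith
  -- key: |a - b| ≤ C^2 / D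
  have hsq : a ^ 2 - b ^ 2 = ‖y‖ ^ 2 - c ^ 2 := by
    have h1 : a ^ 2 = ‖x‖ ^ 2 - 2 * (inner ℝ x y : ℝ) + ‖y‖ ^ 2 := by
      rw [ha, @norm_sub_sq_real]
    have h2 : ‖x‖ * c = (inner ℝ x y : ℝ) := by
      rw [hcval]; field_simp
    have h3 : b ^ 2 = ‖x‖ ^ 2 - 2 * (‖x‖ * c) + c ^ 2 := by rw [hb]; ring
    rw [h1, h3, h2]; ring
  have habdiff : |a - b| ≤ C * C / D := by
    have hab : a - b = (‖y‖ ^ 2 - c ^ 2) / (a + b) := by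
      rw [← hsq]; field_simp; ring
    rw [hab, abs_div]
    have hnum : |‖y‖ ^ 2 - c ^ 2| ≤ C * C := by
      rw [abs_sub_le_iff]
      constructor
      · nlinarith [sq_nonneg c, norm_nonneg y]
      · nlinarith [sq_nonneg (‖y‖ : ℝ), _root_.sq_abs c]
    have hden : D ≤ |a + b| := by
      rw [_root_.abs_of_pos (by linarith : (0:ℝ) < a + b)]; linarith
    exact div_le_div₀ (by nlinarith) hnum (by linarith) hden
  have hxC : |‖x‖ - a| ≤ C := by
    rw [abs_sub_le_iff]
    constructor
    · have h1 : ‖x‖ - a ≤ ‖x - (x - y)‖ := norm_sub_norm_le x (x - y)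
      rw [sub_sub_cancel] at h1; linarith
    · have h2 : a ≤ ‖x‖ + ‖y‖ := norm_sub_le x y
      linarith
  have hexp : (Complex.exp (Complex.I * k * ‖x‖) / (‖x‖ : ℂ)) *
      Complex.exp (-Complex.I * k * (c : ℝ)) = Complex.exp (Complex.I * k * b) / ‖x‖ := by
    rw [div_mul_eq_mul_div, ← Complex.exp_add, hb]
    congr 2
    push_cast
    ring
  rw [hexp]
  have key : (‖x‖ : ℂ) * (Complex.exp (Complex.I * k * a) / (a : ℂ) -
      Complex.exp (Complex.I * k * b) / (‖x‖ : ℂ)) =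
      ((((‖x‖ : ℝ) - a : ℝ) : ℂ) / (a : ℂ)) * Complex.exp (Complex.I * k * a) +
      (Complex.exp (Complex.I * k * a) - Complex.exp (Complex.I * k * b)) := by
    have hane : (a : ℂ) ≠ 0 := by exact_mod_cast hapos.ne'
    have hxne' : ((‖x‖ : ℝ) : ℂ) ≠ 0 := by exact_mod_cast hxpos.ne'
    field_simp
    push_cast
    ring
  have hnorm : ‖x‖ * ‖Complex.exp (Complex.I * k * a) / (a : ℂ) -
      Complex.exp (Complex.I * k * b) / (‖x‖ : ℂ)‖ ≤ C / D + k * (C * C / D) := by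
    rw [show ‖x‖ * ‖Complex.exp (Complex.I * k * a) / (a : ℂ) -
        Complex.exp (Complex.I * k * b) / (‖x‖ : ℂ)‖ =
        ‖(‖x‖ : ℂ) * (Complex.exp (Complex.I * k * a) / (a : ℂ) -
        Complex.exp (Complex.I * k * b) / (‖x‖ : ℂ))‖ by
      rw [norm_mul, Complex.norm_real, Real.norm_eq_abs, _root_.abs_of_pos hxpos]]
    rw [key]
    refine le_trans (norm_add_le _ _) (add_le_add ?_ ?_)
    · rw [norm_mul]
      have h1 : ‖Complex.exp (Complex.I * k * a)‖ = 1 := by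
        rw [Complex.norm_exp]
        norm_num [Complex.mul_re, Complex.I_re, Complex.I_im]
      rw [h1, mul_one, norm_div, Complex.norm_real, Complex.norm_real,
        Real.norm_eq_abs, Real.norm_eq_abs, _root_.abs_of_pos hapos]
      exact div_le_div₀ (by linarith) hxC (by linarith) haD
    · have h2 : ‖Complex.exp (Complex.I * (k * a : ℝ)) -
          Complex.exp (Complex.I * (k * b : ℝ))‖ ≤ |k * a - k * b| := exp_I_lip _ _
      have h3 : (Complex.I * k * a : ℂ) = Complex.I * ((k * a : ℝ) : ℂ) := by
        push_cast; ring
      have h4 : (Complex.I * k * b : ℂ) = Complex.I * ((k * b : ℝ) : ℂ) := by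
        push_cast; ring
      rw [h3, h4]
      refine le_trans h2 ?_
      rw [show k * a - k * b = k * (a - b) by ring, abs_mul, _root_.abs_of_pos hk]
      exact mul_le_mul_of_nonneg_left habdiff hk.le
  refine lt_of_le_of_lt hnorm ?_
  have hDpos : 0 < D := by linarith
  rw [show C / D + k * (C * C / D) = (C + k * C * C) / D by field_simp]
  rw [div_lt_iff₀ hDpos]
  have hfin : (C + k * C * C + 1) ≤ ε * D := by
    calc C + k * C * C + 1 = ((C + k * C * C + 1) / ε) * ε := by field_simp
      _ ≤ D * ε := mul_le_mul_of_nonneg_right hDε hε.le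
      _ = ε * D := mul_comm _ _
  linarith
end

section
/- Let k > 0 and K ⊂ ℝ³ compact nonempty. For the gradient in y, sup_{|x|=r} sup_{y∈K} |x| · | ∇_y ( e^{ik|x-y|}/|x-y| − (e^{ik|x|}/|x|) e^{−ik x̂·y} ) | → 0 as r → ∞. -/
set_option maxHeartbeats 4000000
open Real Complex

section helpers
variable {E : Type*} [NormedAddCommGroup E] [InnerProductSpace ℝ E]

private lemma ffg_hasFDerivAt_norm (x : E) (hx : x ≠ 0) :
    HasFDerivAt (fun z : E => ‖z‖) (‖x‖⁻¹ • innerSL ℝ x) x := by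
  have h1 : HasFDerivAt (fun z : E => ‖z‖ ^ 2) (2 • innerSL ℝ x) x :=
    (hasStrictFDerivAt_norm_sq x).hasFDerivAt
  have h2 : HasDerivAt Real.sqrt (1 / (2 * Real.sqrt (‖x‖ ^ 2))) (‖x‖ ^ 2) :=
    Real.hasDerivAt_sqrt (pow_ne_zero 2 (norm_ne_zero_iff.mpr hx))
  have h3 := h2.comp_hasFDerivAt x h1
  have he : (Real.sqrt ∘ fun z : E => ‖z‖ ^ 2) = fun z : E => ‖z‖ := by
    funext z; simp [Real.sqrt_sq (norm_nonneg z)]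
  rw [he] at h3
  refine h3.congr_fderiv ?_
  ext v
  have hs : Real.sqrt (‖x‖ ^ 2) = ‖x‖ := Real.sqrt_sq (norm_nonneg x)
  have hxn : ‖x‖ ≠ 0 := norm_ne_zero_iff.mpr hx
  simp [hs]
  ring

private lemma ffg_hasFDerivAt_norm_sub (x y : E) (h : x ≠ y) :
    HasFDerivAt (fun z : E => ‖x - z‖) (-(‖x - y‖⁻¹ • innerSL ℝ (x - y))) y := by
  have hi : HasFDerivAt (fun z : E => x - z) (-(ContinuousLinearMap.id ℝ E)) y := by
    exact (hasFDerivAt_id (𝕜 := ℝ) y).const_sub x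
  have h2 := (ffg_hasFDerivAt_norm (x - y) (sub_ne_zero.mpr h)).comp y hi
  refine h2.congr_fderiv ?_
  ext v
  simp

private lemma ffg_phi_hasDerivAt (k d : ℝ) (hd : d ≠ 0) :
    HasDerivAt (fun t : ℝ => Complex.exp (Complex.I * k * t) / (t : ℂ))
      ((Complex.I * k * Complex.exp (Complex.I * k * d) * d - Complex.exp (Complex.I * k * d)) /
        (d : ℂ) ^ 2) d := by
  have h0 : HasDerivAt (fun t : ℝ => (t : ℂ)) 1 d := by
    simpa using (hasDerivAt_id _).ofReal_comp
  have h1 : HasDerivAt (fun t : ℝ => Complex.I * k * (t : ℂ)) (Complex.I * k) d := by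
    simpa using h0.const_mul (Complex.I * (k : ℂ))
  have h3 := h1.cexp.div h0 (by exact_mod_cast hd)
  refine h3.congr_deriv ?_
  ring

private lemma ffg_norm_cexp (a : ℂ) (h : a.re = 0) : ‖Complex.exp a‖ = 1 := by
  rw [Complex.norm_exp, h, Real.exp_zero]

private lemma ffg_lipexp (a b : ℝ) :
    ‖Complex.exp (Complex.I * a) - Complex.exp (Complex.I * b)‖ ≤ |a - b| := by
  have hd : ∀ t : ℝ, HasDerivAt (fun t : ℝ => Complex.exp (Complex.I * t))
      (Complex.exp (Complex.I * t) * Complex.I) t := by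
    intro t
    have h0 : HasDerivAt (fun t : ℝ => (t : ℂ)) 1 t := by
      simpa using (hasDerivAt_id _).ofReal_comp
    simpa using (h0.const_mul Complex.I).cexp
  have hb : ∀ t : ℝ, t ∈ (Set.univ : Set ℝ) →
      ‖Complex.exp (Complex.I * t) * Complex.I‖ ≤ 1 := by
    intro t _
    rw [norm_mul, ffg_norm_cexp _ (by simp), Complex.norm_I, mul_one]
  have := Convex.norm_image_sub_le_of_norm_hasDerivWithin_le
    (f := fun t : ℝ => Complex.exp (Complex.I * t))
    (f' := fun t : ℝ => Complex.exp (Complex.I * t) * Complex.I)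
    (fun t _ => (hd t).hasDerivWithinAt) hb convex_univ (Set.mem_univ b) (Set.mem_univ a)
  simpa [Real.norm_eq_abs] using this

end helpers

private lemma ffg_key {E : Type*} [NormedAddCommGroup E] [InnerProductSpace ℝ E]
    (k M : ℝ) (hk : 0 < k) (hM : 0 ≤ M) (x y : E) (hy : ‖y‖ ≤ M) (hr : 2 * M + 2 ≤ ‖x‖) :
    ‖x‖ * ‖fderiv ℝ (fun z : E =>
        Complex.exp (Complex.I * k * ‖x - z‖) / (‖x - z‖ : ℂ) -
          (Complex.exp (Complex.I * k * ‖x‖) / (‖x‖ : ℂ)) *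
            Complex.exp (-Complex.I * k * (inner ℝ (‖x‖⁻¹ • x) z : ℝ))) y‖ ≤
      (4 + 2 * k ^ 2 * M ^ 2 + 4 * k * M) / ‖x‖ := by
  have hrpos : (0:ℝ) < ‖x‖ := by linarith
  have hx0 : x ≠ 0 := norm_ne_zero_iff.mp (by linarith)
  have hdlb : ‖x‖ - M ≤ ‖x - y‖ := le_trans (by linarith [norm_sub_norm_le x y]) le_rfl
  have hdhalf : ‖x‖ / 2 + 1 ≤ ‖x - y‖ := by linarith
  have hdpos : (0:ℝ) < ‖x - y‖ := by linarith
  have hxy : x ≠ y := by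
    intro h
    rw [h] at hdpos
    simp at hdpos
  have hrd : |‖x‖ - ‖x - y‖| ≤ M := by
    have h1 := abs_norm_sub_norm_le x (x - y)
    simp only [sub_sub_cancel] at h1
    linarith
  -- derivatives
  have hN := ffg_hasFDerivAt_norm_sub x y hxy
  have hphi := ffg_phi_hasDerivAt k ‖x - y‖ hdpos.ne'
  have hF := hphi.hasFDerivAt.comp y hN
  have hm : HasFDerivAt (fun z : E => (inner ℝ (‖x‖⁻¹ • x) z : ℝ))
      (innerSL ℝ (‖x‖⁻¹ • x)) y := (innerSL ℝ (‖x‖⁻¹ • x)).hasFDerivAt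
  have h0 : HasDerivAt (fun t : ℝ => (t : ℂ)) 1 ((inner ℝ (‖x‖⁻¹ • x) y : ℝ)) := by
    simpa using (hasDerivAt_id _).ofReal_comp
  have h1 : HasDerivAt (fun t : ℝ => -Complex.I * k * (t : ℂ)) (-Complex.I * k)
      ((inner ℝ (‖x‖⁻¹ • x) y : ℝ)) := by
    simpa using h0.const_mul (-Complex.I * (k : ℂ))
  have hpsi := (h1.cexp.const_mul (Complex.exp (Complex.I * k * ‖x‖) / (‖x‖ : ℂ)))
  have hG := hpsi.hasFDerivAt.comp y hm
  have hFG : HasFDerivAt (fun z : E =>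
      Complex.exp (Complex.I * k * ‖x - z‖) / (‖x - z‖ : ℂ) -
        (Complex.exp (Complex.I * k * ‖x‖) / (‖x‖ : ℂ)) *
          Complex.exp (-Complex.I * k * (inner ℝ (‖x‖⁻¹ • x) z : ℝ)))
      ((ContinuousLinearMap.smulRight (1 : ℝ →L[ℝ] ℝ)
          ((Complex.I * k * Complex.exp (Complex.I * k * ‖x - y‖) * ‖x - y‖ -
            Complex.exp (Complex.I * k * ‖x - y‖)) / (‖x - y‖ : ℂ) ^ 2)).comp
        (-(‖x - y‖⁻¹ • innerSL ℝ (x - y))) -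
       (ContinuousLinearMap.smulRight (1 : ℝ →L[ℝ] ℝ)
          (Complex.exp (Complex.I * k * ‖x‖) / (‖x‖ : ℂ) *
            (Complex.exp (-Complex.I * k * ((inner ℝ (‖x‖⁻¹ • x) y : ℝ) : ℂ)) *
              (-Complex.I * k)))).comp (innerSL ℝ (‖x‖⁻¹ • x))) y := hF.sub hG
  rw [hFG.fderiv]
  -- abbreviations
  have hE1 : ‖Complex.exp (Complex.I * k * (‖x - y‖ : ℂ))‖ = 1 := ffg_norm_cexp _ (by simp)
  have hpy : |(inner ℝ (‖x‖⁻¹ • x) y : ℝ)| ≤ ‖y‖ := by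
    have h1 := abs_real_inner_le_norm (‖x‖⁻¹ • x) y
    have h2 : ‖(‖x‖⁻¹ • x : E)‖ = 1 := by
      rw [norm_smul, norm_inv, norm_norm]
      field_simp
    rw [h2, one_mul] at h1
    exact h1
  have hpM : |(inner ℝ (‖x‖⁻¹ • x) y : ℝ)| ≤ M := hpy.trans hy
  have hxip : (inner ℝ x y : ℝ) = ‖x‖ * (inner ℝ (‖x‖⁻¹ • x) y : ℝ) := by
    rw [real_inner_smul_left]
    field_simp
  have hdsq : ‖x - y‖ ^ 2 = ‖x‖ ^ 2 - 2 * (‖x‖ * (inner ℝ (‖x‖⁻¹ • x) y : ℝ)) + ‖y‖ ^ 2 := by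
    rw [← hxip]
    exact norm_sub_sq_real x y
  have hp2 : (inner ℝ (‖x‖⁻¹ • x) y : ℝ) ^ 2 ≤ ‖y‖ ^ 2 := by
    nlinarith [hpy, abs_nonneg (inner ℝ (‖x‖⁻¹ • x) y : ℝ), _root_.sq_abs (inner ℝ (‖x‖⁻¹ • x) y : ℝ)]
  have hpMle : (inner ℝ (‖x‖⁻¹ • x) y : ℝ) ≤ M := (le_abs_self _).trans hpM
  have hpMge : -M ≤ (inner ℝ (‖x‖⁻¹ • x) y : ℝ) := neg_le_of_abs_le hpM
  have hsum : ‖x‖ ≤ ‖x - y‖ + (‖x‖ - (inner ℝ (‖x‖⁻¹ • x) y : ℝ)) := by linarith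
  have hfact : (‖x - y‖ - (‖x‖ - (inner ℝ (‖x‖⁻¹ • x) y : ℝ))) *
      (‖x - y‖ + (‖x‖ - (inner ℝ (‖x‖⁻¹ • x) y : ℝ))) = ‖y‖ ^ 2 - (inner ℝ (‖x‖⁻¹ • x) y : ℝ) ^ 2 := by
    linear_combination hdsq
  have hds1 : 0 ≤ ‖x - y‖ - (‖x‖ - (inner ℝ (‖x‖⁻¹ • x) y : ℝ)) := by
    nlinarith [hfact, hp2, hsum, hrpos]
  have hyM2 : ‖y‖ ^ 2 ≤ M ^ 2 := by nlinarith [norm_nonneg y]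
  have hds2 : ‖x - y‖ - (‖x‖ - (inner ℝ (‖x‖⁻¹ • x) y : ℝ)) ≤ M ^ 2 / ‖x‖ := by
    rw [le_div_iff₀ hrpos]
    have h5 := mul_le_mul_of_nonneg_left hsum hds1
    nlinarith [hfact, sq_nonneg (inner ℝ (‖x‖⁻¹ • x) y : ℝ)]
  -- Lipschitz estimate for the exponentials
  have hlipk : ‖Complex.exp (Complex.I * k * (‖x - y‖ : ℂ)) -
      Complex.exp (Complex.I * k * ((‖x‖ - (inner ℝ (‖x‖⁻¹ • x) y : ℝ) : ℝ) : ℂ))‖ ≤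
      k * (M ^ 2 / ‖x‖) := by
    have h1 := ffg_lipexp (k * ‖x - y‖) (k * (‖x‖ - (inner ℝ (‖x‖⁻¹ • x) y : ℝ)))
    have h3 : (Complex.I * ((k * ‖x - y‖ : ℝ) : ℂ)) = Complex.I * k * (‖x - y‖ : ℂ) := by
      push_cast; ring
    have h4 : (Complex.I * ((k * (‖x‖ - (inner ℝ (‖x‖⁻¹ • x) y : ℝ)) : ℝ) : ℂ)) =
        Complex.I * k * ((‖x‖ - (inner ℝ (‖x‖⁻¹ • x) y : ℝ) : ℝ) : ℂ) := by
      push_cast; ring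
    rw [h3, h4] at h1
    have h2 : |k * ‖x - y‖ - k * (‖x‖ - (inner ℝ (‖x‖⁻¹ • x) y : ℝ))| =
        k * (‖x - y‖ - (‖x‖ - (inner ℝ (‖x‖⁻¹ • x) y : ℝ))) := by
      rw [← mul_sub, abs_mul, abs_of_pos hk, _root_.abs_of_nonneg hds1]
    rw [h2] at h1
    exact h1.trans (mul_le_mul_of_nonneg_left hds2 hk.le)
  -- direction vector estimate
  have huw : ‖(‖x - y‖⁻¹ • (x - y) : E) - ‖x‖⁻¹ • x‖ ≤ 2 * M / ‖x‖ := by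
    have hsplit : (‖x - y‖⁻¹ • (x - y) : E) - ‖x‖⁻¹ • x =
        (‖x - y‖⁻¹ - ‖x‖⁻¹) • (x - y) + ‖x‖⁻¹ • ((x - y) - x) := by
      module
    rw [hsplit]
    have h1 : ‖((‖x - y‖⁻¹ - ‖x‖⁻¹) • (x - y) : E)‖ ≤ M / ‖x‖ := by
      rw [norm_smul, Real.norm_eq_abs]
      have heq : ‖x - y‖⁻¹ - ‖x‖⁻¹ = (‖x‖ - ‖x - y‖) / (‖x - y‖ * ‖x‖) := by
        rw [inv_eq_one_div, inv_eq_one_div, div_sub_div _ _ hdpos.ne' hrpos.ne', one_mul, mul_one]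
      rw [heq, abs_div, abs_of_pos (mul_pos hdpos hrpos), div_mul_eq_mul_div,
        div_le_div_iff₀ (mul_pos hdpos hrpos) hrpos]
      nlinarith [mul_le_mul_of_nonneg_right hrd (le_of_lt (mul_pos hdpos hrpos)), abs_nonneg (‖x‖ - ‖x - y‖)]
    have h2 : ‖(‖x‖⁻¹ • ((x - y) - x) : E)‖ ≤ M / ‖x‖ := by
      have hxx : (x - y) - x = -y := by abel
      rw [hxx, norm_smul, norm_neg, norm_inv, norm_norm]
      have h3 : ‖x‖⁻¹ * ‖y‖ ≤ ‖x‖⁻¹ * M := by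
        exact mul_le_mul_of_nonneg_left hy (inv_nonneg.mpr hrpos.le)
      rw [div_eq_inv_mul]
      exact h3
    calc ‖((‖x - y‖⁻¹ - ‖x‖⁻¹) • (x - y) : E) + ‖x‖⁻¹ • ((x - y) - x)‖ ≤
        ‖((‖x - y‖⁻¹ - ‖x‖⁻¹) • (x - y) : E)‖ + ‖(‖x‖⁻¹ • ((x - y) - x) : E)‖ := norm_add_le _ _
      _ ≤ M / ‖x‖ + M / ‖x‖ := add_le_add h1 h2
      _ = 2 * M / ‖x‖ := by ring
  have hdC : ((‖x - y‖ : ℝ) : ℂ) ≠ 0 := by exact_mod_cast hdpos.ne'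
  have hrC : ((‖x‖ : ℝ) : ℂ) ≠ 0 := by exact_mod_cast hrpos.ne'
  have hE2 : ‖Complex.exp (Complex.I * k * ((‖x‖ - (inner ℝ (‖x‖⁻¹ • x) y : ℝ) : ℝ) : ℂ))‖ = 1 := ffg_norm_cexp _ (by simp)
  have hinvd : ‖x - y‖⁻¹ ≤ 2 / ‖x‖ := by
    rw [inv_eq_one_div, div_le_div_iff₀ hdpos hrpos]; linarith
  have hC0 : (0:ℝ) ≤ (4 + 2 * k ^ 2 * M ^ 2 + 4 * k * M) / ‖x‖ ^ 2 :=
    div_nonneg (by nlinarith [mul_nonneg hk.le hM, sq_nonneg (k * M)]) (sq_nonneg _)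
  have hBr : (Complex.exp (Complex.I * k * ‖x‖) / (‖x‖ : ℂ) *
        (Complex.exp (-Complex.I * k * ((inner ℝ (‖x‖⁻¹ • x) y : ℝ) : ℂ)) * (-Complex.I * k))) =
      -Complex.I * k * (Complex.exp (Complex.I * k * ((‖x‖ - (inner ℝ (‖x‖⁻¹ • x) y : ℝ) : ℝ) : ℂ)) / (‖x‖ : ℂ)) := by
    rw [show ((‖x‖ - (inner ℝ (‖x‖⁻¹ • x) y : ℝ) : ℝ) : ℂ) =
        (‖x‖ : ℂ) - ((inner ℝ (‖x‖⁻¹ • x) y : ℝ) : ℂ) by push_cast; ring]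
    rw [show Complex.I * k * ((‖x‖ : ℂ) - ((inner ℝ (‖x‖⁻¹ • x) y : ℝ) : ℂ)) =
        Complex.I * k * (‖x‖ : ℂ) + -Complex.I * k * ((inner ℝ (‖x‖⁻¹ • x) y : ℝ) : ℂ) by ring]
    rw [Complex.exp_add]
    ring
  have hBn : ‖(Complex.exp (Complex.I * k * ‖x‖) / (‖x‖ : ℂ) *
        (Complex.exp (-Complex.I * k * ((inner ℝ (‖x‖⁻¹ • x) y : ℝ) : ℂ)) * (-Complex.I * k)))‖ = k / ‖x‖ := by
    rw [hBr, norm_mul, norm_div, hE2, norm_mul, norm_neg, Complex.norm_I, one_mul,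
      Complex.norm_real, Real.norm_eq_abs, _root_.abs_of_pos hk, Complex.norm_real,
      Real.norm_eq_abs, _root_.abs_of_pos hrpos]
    ring
  refine le_trans (mul_le_mul_of_nonneg_left
    (ContinuousLinearMap.opNorm_le_bound _ hC0 fun v => ?_) hrpos.le)
    (le_of_eq (by field_simp))
  have happ : ((ContinuousLinearMap.smulRight (1 : ℝ →L[ℝ] ℝ)
          ((Complex.I * k * Complex.exp (Complex.I * k * ‖x - y‖) * ‖x - y‖ -
            Complex.exp (Complex.I * k * ‖x - y‖)) / (‖x - y‖ : ℂ) ^ 2)).comp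
        (-(‖x - y‖⁻¹ • innerSL ℝ (x - y))) -
       (ContinuousLinearMap.smulRight (1 : ℝ →L[ℝ] ℝ)
          (Complex.exp (Complex.I * k * ‖x‖) / (‖x‖ : ℂ) *
            (Complex.exp (-Complex.I * k * ((inner ℝ (‖x‖⁻¹ • x) y : ℝ) : ℂ)) *
              (-Complex.I * k)))).comp (innerSL ℝ (‖x‖⁻¹ • x))) v =
      Complex.exp (Complex.I * k * (‖x - y‖ : ℂ)) / (‖x - y‖ : ℂ) ^ 2 * ((inner ℝ (‖x - y‖⁻¹ • (x - y)) v : ℝ) : ℂ)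
      + (-Complex.I * k * Complex.exp (Complex.I * k * (‖x - y‖ : ℂ)) / (‖x - y‖ : ℂ) - (Complex.exp (Complex.I * k * ‖x‖) / (‖x‖ : ℂ) *
        (Complex.exp (-Complex.I * k * ((inner ℝ (‖x‖⁻¹ • x) y : ℝ) : ℂ)) * (-Complex.I * k)))) * ((inner ℝ (‖x - y‖⁻¹ • (x - y)) v : ℝ) : ℂ)
      + (Complex.exp (Complex.I * k * ‖x‖) / (‖x‖ : ℂ) *
        (Complex.exp (-Complex.I * k * ((inner ℝ (‖x‖⁻¹ • x) y : ℝ) : ℂ)) * (-Complex.I * k))) * (((inner ℝ (‖x - y‖⁻¹ • (x - y)) v : ℝ) : ℂ) - ((inner ℝ (‖x‖⁻¹ • x) v : ℝ) : ℂ)) := by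
    rw [show (inner ℝ (‖x - y‖⁻¹ • (x - y)) v : ℝ) = ‖x - y‖⁻¹ * inner ℝ (x - y) v from
      real_inner_smul_left _ _ _]
    simp only [ContinuousLinearMap.sub_apply, ContinuousLinearMap.comp_apply,
      ContinuousLinearMap.smulRight_apply, ContinuousLinearMap.one_apply,
      ContinuousLinearMap.neg_apply, ContinuousLinearMap.smul_apply, innerSL_apply_apply,
      smul_eq_mul, Complex.real_smul]
    push_cast
    simp only [div_eq_mul_inv]
    ring_nf
    field_simp
  rw [happ]
  have hu1 : ‖(‖x - y‖⁻¹ • (x - y) : E)‖ = 1 := by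
    rw [norm_smul, norm_inv, norm_norm]; field_simp
  have hc1 : ‖((inner ℝ (‖x - y‖⁻¹ • (x - y)) v : ℝ) : ℂ)‖ ≤ ‖v‖ := by
    rw [Complex.norm_real, Real.norm_eq_abs]
    calc |(inner ℝ (‖x - y‖⁻¹ • (x - y)) v : ℝ)| ≤ ‖(‖x - y‖⁻¹ • (x - y) : E)‖ * ‖v‖ :=
        abs_real_inner_le_norm _ _
      _ = ‖v‖ := by rw [hu1, one_mul]
  have hc2 : ‖((inner ℝ (‖x - y‖⁻¹ • (x - y)) v : ℝ) : ℂ) - ((inner ℝ (‖x‖⁻¹ • x) v : ℝ) : ℂ)‖ ≤ 2 * M / ‖x‖ * ‖v‖ := by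
    rw [← Complex.ofReal_sub, Complex.norm_real, Real.norm_eq_abs, ← inner_sub_left]
    calc |(inner ℝ ((‖x - y‖⁻¹ • (x - y) : E) - ‖x‖⁻¹ • x) v : ℝ)| ≤
        ‖(‖x - y‖⁻¹ • (x - y) : E) - ‖x‖⁻¹ • x‖ * ‖v‖ := abs_real_inner_le_norm _ _
      _ ≤ 2 * M / ‖x‖ * ‖v‖ := mul_le_mul_of_nonneg_right huw (norm_nonneg v)
  have ht1 : ‖Complex.exp (Complex.I * k * (‖x - y‖ : ℂ)) / (‖x - y‖ : ℂ) ^ 2‖ ≤ 4 / ‖x‖ ^ 2 := by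
    rw [norm_div, hE1, norm_pow, Complex.norm_real, Real.norm_eq_abs, _root_.abs_of_pos hdpos]
    rw [div_le_div_iff₀ (by positivity) (by positivity)]
    nlinarith [hdhalf, hrpos]
  have ht2 : ‖-Complex.I * k * Complex.exp (Complex.I * k * (‖x - y‖ : ℂ)) / (‖x - y‖ : ℂ) - (Complex.exp (Complex.I * k * ‖x‖) / (‖x‖ : ℂ) *
        (Complex.exp (-Complex.I * k * ((inner ℝ (‖x‖⁻¹ • x) y : ℝ) : ℂ)) * (-Complex.I * k)))‖ ≤
      (2 * k ^ 2 * M ^ 2 + 2 * k * M) / ‖x‖ ^ 2 := by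
    have hfac : -Complex.I * k * Complex.exp (Complex.I * k * (‖x - y‖ : ℂ)) / (‖x - y‖ : ℂ) - (Complex.exp (Complex.I * k * ‖x‖) / (‖x‖ : ℂ) *
        (Complex.exp (-Complex.I * k * ((inner ℝ (‖x‖⁻¹ • x) y : ℝ) : ℂ)) * (-Complex.I * k))) =
        -Complex.I * k * (Complex.exp (Complex.I * k * (‖x - y‖ : ℂ)) / (‖x - y‖ : ℂ) - Complex.exp (Complex.I * k * ((‖x‖ - (inner ℝ (‖x‖⁻¹ • x) y : ℝ) : ℝ) : ℂ)) / (‖x‖ : ℂ)) := by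
      rw [hBr]; ring
    rw [hfac, norm_mul]
    have hnik : ‖-Complex.I * (k : ℂ)‖ = k := by
      rw [norm_mul, norm_neg, Complex.norm_I, one_mul, Complex.norm_real, Real.norm_eq_abs,
        _root_.abs_of_pos hk]
    rw [hnik]
    have hsplit2 : Complex.exp (Complex.I * k * (‖x - y‖ : ℂ)) / (‖x - y‖ : ℂ) - Complex.exp (Complex.I * k * ((‖x‖ - (inner ℝ (‖x‖⁻¹ • x) y : ℝ) : ℝ) : ℂ)) / (‖x‖ : ℂ) =
        (Complex.exp (Complex.I * k * (‖x - y‖ : ℂ)) - Complex.exp (Complex.I * k * ((‖x‖ - (inner ℝ (‖x‖⁻¹ • x) y : ℝ) : ℝ) : ℂ))) / (‖x - y‖ : ℂ) +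
          Complex.exp (Complex.I * k * ((‖x‖ - (inner ℝ (‖x‖⁻¹ • x) y : ℝ) : ℝ) : ℂ)) * (((‖x - y‖ : ℝ) : ℂ)⁻¹ - ((‖x‖ : ℝ) : ℂ)⁻¹) := by
      field_simp
      ring
    rw [hsplit2]
    have hA : ‖(Complex.exp (Complex.I * k * (‖x - y‖ : ℂ)) - Complex.exp (Complex.I * k * ((‖x‖ - (inner ℝ (‖x‖⁻¹ • x) y : ℝ) : ℝ) : ℂ))) / (‖x - y‖ : ℂ)‖ ≤ k * M ^ 2 / ‖x‖ * (2 / ‖x‖) := by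
      rw [norm_div, Complex.norm_real, Real.norm_eq_abs, _root_.abs_of_pos hdpos,
        div_eq_mul_inv]
      have h6 : ‖Complex.exp (Complex.I * k * (‖x - y‖ : ℂ)) - Complex.exp (Complex.I * k * ((‖x‖ - (inner ℝ (‖x‖⁻¹ • x) y : ℝ) : ℝ) : ℂ))‖ ≤ k * M ^ 2 / ‖x‖ := by
        refine hlipk.trans (le_of_eq ?_); ring
      exact mul_le_mul h6 hinvd (inv_nonneg.mpr hdpos.le)
        (div_nonneg (mul_nonneg hk.le (sq_nonneg M)) hrpos.le)
    have hB2 : ‖Complex.exp (Complex.I * k * ((‖x‖ - (inner ℝ (‖x‖⁻¹ • x) y : ℝ) : ℝ) : ℂ)) * (((‖x - y‖ : ℝ) : ℂ)⁻¹ - ((‖x‖ : ℝ) : ℂ)⁻¹)‖ ≤ 2 * M / ‖x‖ ^ 2 := by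
      rw [norm_mul, hE2, one_mul, ← Complex.ofReal_inv, ← Complex.ofReal_inv,
        ← Complex.ofReal_sub, Complex.norm_real, Real.norm_eq_abs]
      have heq2 : ‖x - y‖⁻¹ - ‖x‖⁻¹ = (‖x‖ - ‖x - y‖) / (‖x - y‖ * ‖x‖) := by
        rw [inv_eq_one_div, inv_eq_one_div, div_sub_div _ _ hdpos.ne' hrpos.ne', one_mul, mul_one]
      rw [heq2, abs_div, _root_.abs_of_pos (mul_pos hdpos hrpos),
        div_le_div_iff₀ (mul_pos hdpos hrpos) (by positivity)]
      have e1 : |‖x‖ - ‖x - y‖| * ‖x‖ ^ 2 ≤ M * ‖x‖ ^ 2 :=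
        mul_le_mul_of_nonneg_right hrd (sq_nonneg _)
      have e2 : (M * ‖x‖) * ‖x‖ ≤ (M * ‖x‖) * (2 * ‖x - y‖) :=
        mul_le_mul_of_nonneg_left (by linarith) (mul_nonneg hM hrpos.le)
      nlinarith [e1, e2]
    calc k * ‖(Complex.exp (Complex.I * k * (‖x - y‖ : ℂ)) - Complex.exp (Complex.I * k * ((‖x‖ - (inner ℝ (‖x‖⁻¹ • x) y : ℝ) : ℝ) : ℂ))) / (‖x - y‖ : ℂ) +
          Complex.exp (Complex.I * k * ((‖x‖ - (inner ℝ (‖x‖⁻¹ • x) y : ℝ) : ℝ) : ℂ)) * (((‖x - y‖ : ℝ) : ℂ)⁻¹ - ((‖x‖ : ℝ) : ℂ)⁻¹)‖ ≤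
        k * (k * M ^ 2 / ‖x‖ * (2 / ‖x‖) + 2 * M / ‖x‖ ^ 2) := by
          refine mul_le_mul_of_nonneg_left ((norm_add_le _ _).trans (add_le_add hA hB2)) hk.le
      _ = (2 * k ^ 2 * M ^ 2 + 2 * k * M) / ‖x‖ ^ 2 := by field_simp
  calc ‖Complex.exp (Complex.I * k * (‖x - y‖ : ℂ)) / (‖x - y‖ : ℂ) ^ 2 * ((inner ℝ (‖x - y‖⁻¹ • (x - y)) v : ℝ) : ℂ)
      + (-Complex.I * k * Complex.exp (Complex.I * k * (‖x - y‖ : ℂ)) / (‖x - y‖ : ℂ) - (Complex.exp (Complex.I * k * ‖x‖) / (‖x‖ : ℂ) *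
        (Complex.exp (-Complex.I * k * ((inner ℝ (‖x‖⁻¹ • x) y : ℝ) : ℂ)) * (-Complex.I * k)))) * ((inner ℝ (‖x - y‖⁻¹ • (x - y)) v : ℝ) : ℂ)
      + (Complex.exp (Complex.I * k * ‖x‖) / (‖x‖ : ℂ) *
        (Complex.exp (-Complex.I * k * ((inner ℝ (‖x‖⁻¹ • x) y : ℝ) : ℂ)) * (-Complex.I * k))) * (((inner ℝ (‖x - y‖⁻¹ • (x - y)) v : ℝ) : ℂ) - ((inner ℝ (‖x‖⁻¹ • x) v : ℝ) : ℂ))‖ ≤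
      ‖Complex.exp (Complex.I * k * (‖x - y‖ : ℂ)) / (‖x - y‖ : ℂ) ^ 2 * ((inner ℝ (‖x - y‖⁻¹ • (x - y)) v : ℝ) : ℂ)‖
      + ‖(-Complex.I * k * Complex.exp (Complex.I * k * (‖x - y‖ : ℂ)) / (‖x - y‖ : ℂ) - (Complex.exp (Complex.I * k * ‖x‖) / (‖x‖ : ℂ) *
        (Complex.exp (-Complex.I * k * ((inner ℝ (‖x‖⁻¹ • x) y : ℝ) : ℂ)) * (-Complex.I * k)))) * ((inner ℝ (‖x - y‖⁻¹ • (x - y)) v : ℝ) : ℂ)‖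
      + ‖(Complex.exp (Complex.I * k * ‖x‖) / (‖x‖ : ℂ) *
        (Complex.exp (-Complex.I * k * ((inner ℝ (‖x‖⁻¹ • x) y : ℝ) : ℂ)) * (-Complex.I * k))) * (((inner ℝ (‖x - y‖⁻¹ • (x - y)) v : ℝ) : ℂ) - ((inner ℝ (‖x‖⁻¹ • x) v : ℝ) : ℂ))‖ := norm_add₃_le
    _ ≤ 4 / ‖x‖ ^ 2 * ‖v‖ + (2 * k ^ 2 * M ^ 2 + 2 * k * M) / ‖x‖ ^ 2 * ‖v‖
        + k / ‖x‖ * (2 * M / ‖x‖ * ‖v‖) := by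
      rw [norm_mul, norm_mul, norm_mul, hBn]
      refine add_le_add (add_le_add
        (mul_le_mul ht1 hc1 (norm_nonneg _) (by positivity))
        (mul_le_mul ht2 hc1 (norm_nonneg _) (div_nonneg (by nlinarith [sq_nonneg (k*M), mul_nonneg hk.le hM]) (sq_nonneg _))))
        (mul_le_mul_of_nonneg_left hc2 (div_nonneg hk.le hrpos.le))
    _ = (4 + 2 * k ^ 2 * M ^ 2 + 4 * k * M) / ‖x‖ ^ 2 * ‖v‖ := by field_simp; ring

theorem farfield_asymptotic_gradient (k : ℝ) (hk : 0 < k)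
    (K : Set (EuclideanSpace ℝ (Fin 3))) (hK : IsCompact K) (hKne : K.Nonempty) :
    ∀ ε > 0, ∃ R : ℝ, ∀ x : EuclideanSpace ℝ (Fin 3), R ≤ ‖x‖ → ∀ y ∈ K,
      ‖x‖ * ‖fderiv ℝ (fun z : EuclideanSpace ℝ (Fin 3) =>
          Complex.exp (Complex.I * k * ‖x - z‖) / (‖x - z‖ : ℂ) -
            (Complex.exp (Complex.I * k * ‖x‖) / (‖x‖ : ℂ)) *
              Complex.exp (-Complex.I * k * (inner ℝ (‖x‖⁻¹ • x) z : ℝ))) y‖ < ε := by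
  intro ε hε
  obtain ⟨M0, hM0⟩ := isBounded_iff_forall_norm_le.mp hK.isBounded
  set M : ℝ := max M0 0 with hM
  have hMnn : 0 ≤ M := le_max_right _ _
  set C0 : ℝ := 4 + 2 * k ^ 2 * M ^ 2 + 4 * k * M with hC0
  have hC0pos : 0 < C0 := by
    have h1 : 0 ≤ k * M := mul_nonneg hk.le hMnn
    nlinarith [sq_nonneg (k * M)]
  refine ⟨max (2 * M + 2) (C0 / ε + 1), fun x hx y hy => ?_⟩
  have hyM : ‖y‖ ≤ M := (hM0 y hy).trans (le_max_left _ _)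
  have hrx : 2 * M + 2 ≤ ‖x‖ := (le_max_left _ _).trans hx
  have hrx2 : C0 / ε + 1 ≤ ‖x‖ := (le_max_right _ _).trans hx
  have hrpos : 0 < ‖x‖ := by linarith
  have h1 := ffg_key k M hk hMnn x y hyM hrx
  refine lt_of_le_of_lt h1 ?_
  rw [div_lt_iff₀ hrpos]
  have h2 : ε * (C0 / ε + 1) ≤ ε * ‖x‖ := mul_le_mul_of_nonneg_left hrx2 hε.le
  have h3 : ε * (C0 / ε + 1) = C0 + ε := by field_simp
  nlinarith
end
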